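/- Let 𝒜 be a complex unital Banach algebra, A, B, C ∈ 𝒜, z₀ ∈ ℂ and ρ > 0. Assume σ(A) is contained in the open ball B(z₀, ρ) and σ(−B) is disjoint from the closed ball of center z₀ and radius ρ (so that for every z with |z − z₀| = ρ both z·1 − A and z·1 + B are invertible). Then the element X := −(2πi)^{-1} ∮_{|z−z₀|=ρ} (z·1 − A)^{-1} · C · (z·1 + B)^{-1} dz (a circle integral of an 𝒜-valued continuous function) satisfies A·X + X·B + C = 0. -/

import Mathlib

open Metric Complex Filter Set Topology

section RosenblumAux

variable {𝒜 : Type*} [NormedRing 𝒜] [NormedAlgebra ℂ 𝒜] [CompleteSpace 𝒜]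

set_option linter.unusedSectionVars false

lemma circleIntegral_resolvent_one (A : 𝒜) (z₀ : ℂ) {ρ : ℝ} (hρ : 0 < ρ)
    (hA : spectrum ℂ A ⊆ ball z₀ ρ) :
    (∮ z in C(z₀, ρ), resolvent A z) = (2 * Real.pi * I) • (1 : 𝒜) := by
  have hres : ∀ z : ℂ, z ∉ ball z₀ ρ → z ∈ resolventSet ℂ A := by
    intro z hz
    by_contra h
    exact hz (hA h)
  have hdiff : ∀ z : ℂ, z ∉ ball z₀ ρ → DifferentiableAt ℂ (resolvent A) z := fun z hz =>
    (spectrum.hasDerivAt_resolvent (hres z hz)).differentiableAt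
  have hconst : ∀ R : ℝ, ρ ≤ R →
      (∮ z in C(z₀, R), resolvent A z) = ∮ z in C(z₀, ρ), resolvent A z := fun R hR =>
    Complex.circleIntegral_eq_of_differentiable_on_annulus_off_countable hρ hR countable_empty
      (fun z hz => (hdiff z hz.2).continuousAt.continuousWithinAt)
      (fun z hz => hdiff z fun h => hz.1.2 (ball_subset_closedBall h))
  obtain ⟨c, hc⟩ := (spectrum.resolvent_isBigO_inv A (𝕜 := ℂ)).bound
  rw [atTop_basis_Ioi.cobounded_of_norm.eventually_iff] at hc
  obtain ⟨M, -, hM⟩ := hc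
  set c' : ℝ := max c 0 with hc'
  set K : ℝ := 2 * Real.pi * (4 * c' * ‖A‖) with hK
  set R₀ : ℝ := max (max ρ 1) (2 * ‖z₀‖ + 2 * (max M 0 + 1)) with hR₀
  have hR₀pos : 0 < R₀ := lt_of_lt_of_le one_pos ((le_max_right ρ 1).trans (le_max_left _ _))
  have key : Tendsto (fun R : ℝ => ∮ z in C(z₀, R), resolvent A z) atTop
      (𝓝 ((2 * Real.pi * I) • (1 : 𝒜))) := by
    rw [tendsto_iff_norm_sub_tendsto_zero]
    have hbound : ∀ᶠ R in atTop,
        ‖(∮ z in C(z₀, R), resolvent A z) - (2 * Real.pi * I) • (1 : 𝒜)‖ ≤ K / R := by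
      filter_upwards [eventually_ge_atTop R₀] with R hRR
      have hρR : ρ ≤ R := ((le_max_left ρ 1).trans (le_max_left _ _)).trans hRR
      have hRpos : (0 : ℝ) < R := hR₀pos.trans_le hRR
      have hz₀R : 2 * ‖z₀‖ + 2 * (max M 0 + 1) ≤ R := (le_max_right _ _).trans hRR
      have hnorm : ∀ z ∈ sphere z₀ R, R / 2 ≤ ‖z‖ := by
        intro z hz
        have h3 : ‖z - z₀‖ = R := mem_sphere_iff_norm.mp hz
        have h4 := norm_sub_le z z₀
        have h5 : (0:ℝ) ≤ max M 0 := le_max_right M 0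
        have hz₀ : ‖z₀‖ ≤ R / 2 := by nlinarith [norm_nonneg z₀]
        linarith
      have hhalf : M < R / 2 := by
        have h5 : M ≤ max M 0 := le_max_left M 0
        nlinarith [norm_nonneg z₀]
      have hRhalf : (0:ℝ) < R / 2 := by linarith
      have hpt : ∀ z ∈ sphere z₀ R,
          ‖resolvent A z - z⁻¹ • (1 : 𝒜)‖ ≤ 4 * c' * ‖A‖ / R ^ 2 := by
        intro z hz
        have hzn : R / 2 ≤ ‖z‖ := hnorm z hz
        have hz0 : z ≠ 0 := by
          intro h; rw [h, norm_zero] at hzn; linarith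
        have hMz : M < ‖z‖ := lt_of_lt_of_le hhalf hzn
        have hzres : z ∈ resolventSet ℂ A := by
          refine hres z ?_
          simp only [mem_ball, not_lt]
          rw [mem_sphere.mp hz]; exact hρR
        have hu : IsUnit (algebraMap ℂ 𝒜 z - A) := spectrum.mem_resolventSet_iff.mp hzres
        have h1 : resolvent A z * (algebraMap ℂ 𝒜 z - A) = 1 :=
          Ring.inverse_mul_cancel _ hu
        have hid : resolvent A z - z⁻¹ • (1 : 𝒜) = resolvent A z * (z⁻¹ • A) := by
          have h2 : (algebraMap ℂ 𝒜 z - A) * (z⁻¹ • (1 : 𝒜)) = 1 - z⁻¹ • A := by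
            rw [mul_smul_comm, mul_one, smul_sub, Algebra.algebraMap_eq_smul_one, smul_smul,
              inv_mul_cancel₀ hz0, one_smul]
          calc resolvent A z - z⁻¹ • (1 : 𝒜)
              = resolvent A z * 1 - resolvent A z * ((algebraMap ℂ 𝒜 z - A) * (z⁻¹ • (1:𝒜))) := by
                rw [mul_one, ← mul_assoc, h1, one_mul]
            _ = resolvent A z * (1 - (algebraMap ℂ 𝒜 z - A) * (z⁻¹ • (1:𝒜))) := by
                rw [mul_sub, mul_one]
            _ = resolvent A z * (z⁻¹ • A) := by rw [h2, sub_sub_cancel]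
        rw [hid]
        have hb1 : ‖resolvent A z‖ ≤ c' * ‖z‖⁻¹ := by
          calc ‖resolvent A z‖ ≤ c * ‖z⁻¹‖ := hM hMz
            _ ≤ c' * ‖z‖⁻¹ := by
                rw [norm_inv]
                exact mul_le_mul_of_nonneg_right (le_max_left c 0) (by positivity)
        calc ‖resolvent A z * (z⁻¹ • A)‖ ≤ ‖resolvent A z‖ * ‖z⁻¹ • A‖ := norm_mul_le _ _
          _ = ‖resolvent A z‖ * (‖z‖⁻¹ * ‖A‖) := by rw [norm_smul, norm_inv]
          _ ≤ (c' * ‖z‖⁻¹) * (‖z‖⁻¹ * ‖A‖) := by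
              apply mul_le_mul_of_nonneg_right hb1 (by positivity)
          _ = c' * ‖A‖ * (‖z‖⁻¹ * ‖z‖⁻¹) := by ring
          _ ≤ c' * ‖A‖ * ((R/2)⁻¹ * (R/2)⁻¹) := by
              apply mul_le_mul_of_nonneg_left _ (by positivity)
              have h := inv_anti₀ hRhalf hzn
              exact mul_le_mul h h (by positivity) (by positivity)
          _ = 4 * c' * ‖A‖ / R ^ 2 := by field_simp; ring
      have h0mem : (0 : ℂ) ∈ ball z₀ R := by
        simp only [mem_ball, dist_zero_left]
        have h5 : (0:ℝ) ≤ max M 0 := le_max_right M 0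
        nlinarith [norm_nonneg z₀]
      have hIone : (∮ z in C(z₀, R), z⁻¹ • (1 : 𝒜)) = (2 * Real.pi * I) • (1 : 𝒜) := by
        have h6 := circleIntegral.integral_sub_inv_of_mem_ball h0mem
        simp only [sub_zero] at h6
        rw [circleIntegral.integral_smul_const, h6]
      have hInt1 : CircleIntegrable (resolvent A) z₀ R :=
        (continuousOn_of_forall_continuousAt fun z hz => (hdiff z (by
          simp only [mem_ball, not_lt]
          rw [mem_sphere.mp hz]; exact hρR)).continuousAt).circleIntegrable hRpos.le
      have hInt2 : CircleIntegrable (fun z : ℂ => z⁻¹ • (1 : 𝒜)) z₀ R := by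
        refine (ContinuousOn.smul ?_ continuousOn_const).circleIntegrable hRpos.le
        intro z hz
        have hzn : R / 2 ≤ ‖z‖ := hnorm z hz
        have hz0 : z ≠ 0 := by intro h; rw [h, norm_zero] at hzn; linarith
        exact (continuousAt_inv₀ hz0).continuousWithinAt
      have hsub : (∮ z in C(z₀, R), resolvent A z) - (2 * Real.pi * I) • (1 : 𝒜)
          = ∮ z in C(z₀, R), (resolvent A z - z⁻¹ • (1 : 𝒜)) := by
        rw [circleIntegral.integral_sub hInt1 hInt2, hIone]
      rw [hsub]
      calc ‖∮ z in C(z₀, R), (resolvent A z - z⁻¹ • (1:𝒜))‖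
          ≤ 2 * Real.pi * R * (4 * c' * ‖A‖ / R ^ 2) :=
            circleIntegral.norm_integral_le_of_norm_le_const hRpos.le hpt
        _ = K / R := by
            rw [hK]; field_simp
    refine squeeze_zero' (Eventually.of_forall fun _ => norm_nonneg _) hbound ?_
    have : Tendsto (fun R : ℝ => K * R⁻¹) atTop (𝓝 (K * 0)) :=
      tendsto_inv_atTop_zero.const_mul K
    exact (by simpa using this : Tendsto (fun R : ℝ => K * R⁻¹) atTop (𝓝 0)).congr
      fun R => (div_eq_mul_inv K R).symm
  have heq : (fun R : ℝ => ∮ z in C(z₀, R), resolvent A z) =ᶠ[atTop]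
      (fun _ => ∮ z in C(z₀, ρ), resolvent A z) := by
    filter_upwards [eventually_ge_atTop ρ] with R hR using hconst R hR
  exact tendsto_nhds_unique tendsto_const_nhds (Filter.Tendsto.congr' heq key)

lemma clm_circleIntegral_comm (φ : 𝒜 →L[ℂ] 𝒜) {f : ℂ → 𝒜} {c : ℂ} {R : ℝ}
    (hf : CircleIntegrable f c R) :
    φ (∮ z in C(c, R), f z) = ∮ z in C(c, R), φ (f z) := by
  simp only [circleIntegral]
  rw [← φ.intervalIntegral_comp_comm hf.out]
  simp only [ContinuousLinearMap.map_smul]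

lemma resolvent_continuousAt {A : 𝒜} {z : ℂ} (hz : z ∈ resolventSet ℂ A) :
    ContinuousAt (resolvent A) z :=
  (spectrum.hasDerivAt_resolvent hz).differentiableAt.continuousAt

lemma circleIntegral_add {f g : ℂ → 𝒜} {c : ℂ} {R : ℝ} (hf : CircleIntegrable f c R)
    (hg : CircleIntegrable g c R) :
    (∮ z in C(c, R), (f z + g z)) = (∮ z in C(c, R), f z) + ∮ z in C(c, R), g z := by
  simp only [circleIntegral, smul_add, intervalIntegral.integral_add hf.out hg.out]

lemma circleIntegral_resolvent_zero {B : 𝒜} {z₀ : ℂ} {ρ : ℝ} (hρ : 0 ≤ ρ)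
    (hB : ∀ z ∈ closedBall z₀ ρ, z ∈ resolventSet ℂ B) :
    (∮ z in C(z₀, ρ), resolvent B z) = 0 := by
  refine Complex.circleIntegral_eq_zero_of_differentiable_on_off_countable hρ
    countable_empty (fun z hz => (resolvent_continuousAt (hB z hz)).continuousWithinAt)
    (fun z hz => ?_)
  exact (spectrum.hasDerivAt_resolvent (hB z (ball_subset_closedBall hz.1))).differentiableAt

theorem stmt_4' {𝒜 : Type*} [NormedRing 𝒜] [NormedAlgebra ℂ 𝒜] [CompleteSpace 𝒜]
    (A B C : 𝒜) (z₀ : ℂ) (ρ : ℝ) (hρ : 0 < ρ)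
    (hA : spectrum ℂ A ⊆ Metric.ball z₀ ρ)
    (hB : spectrum ℂ (-B) ∩ Metric.closedBall z₀ ρ = ∅)
    (hres1 : (∮ z in C(z₀, ρ), resolvent A z) = (2 * Real.pi * I) • (1 : 𝒜)) :
    ∀ X : 𝒜,
      X = -((2 * (Real.pi : ℂ) * Complex.I)⁻¹ •
        ∮ z in C(z₀, ρ), Ring.inverse (algebraMap ℂ 𝒜 z - A) * C *
          Ring.inverse (algebraMap ℂ 𝒜 z + B)) →
      A * X + X * B + C = 0 := by
  intro X hX
  -- basic resolvent set facts
  have hAres : ∀ z ∈ sphere z₀ ρ, z ∈ resolventSet ℂ A := by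
    intro z hz
    by_contra h
    have hzsp : z ∈ spectrum ℂ A := h
    have := hA hzsp
    rw [mem_ball] at this
    rw [mem_sphere.mp hz] at this
    exact lt_irrefl _ this
  have hBres : ∀ z ∈ closedBall z₀ ρ, z ∈ resolventSet ℂ (-B) := by
    intro z hz
    by_contra h
    have hzsp : z ∈ spectrum ℂ (-B) := h
    exact absurd (hB ▸ (mem_inter hzsp hz)) (notMem_empty z)
  -- rewrite the integrand using `resolvent`
  have hrw : (fun z : ℂ => Ring.inverse (algebraMap ℂ 𝒜 z - A) * C *
      Ring.inverse (algebraMap ℂ 𝒜 z + B)) =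
      fun z : ℂ => resolvent A z * C * resolvent (-B) z := by
    funext z
    rw [resolvent, resolvent, sub_neg_eq_add]
  rw [hrw] at hX
  set W : 𝒜 := ∮ z in C(z₀, ρ), resolvent A z * C * resolvent (-B) z with hW
  -- integrabilities
  have hcontA : ContinuousOn (resolvent A) (sphere z₀ ρ) :=
    continuousOn_of_forall_continuousAt fun z hz => resolvent_continuousAt (hAres z hz)
  have hcontB : ContinuousOn (resolvent (-B)) (sphere z₀ ρ) :=
    continuousOn_of_forall_continuousAt fun z hz =>
      resolvent_continuousAt (hBres z (sphere_subset_closedBall hz))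
  have hcontf : ContinuousOn (fun z : ℂ => resolvent A z * C * resolvent (-B) z)
      (sphere z₀ ρ) := (hcontA.mul continuousOn_const).mul hcontB
  have hint : CircleIntegrable (fun z : ℂ => resolvent A z * C * resolvent (-B) z) z₀ ρ :=
    hcontf.circleIntegrable hρ.le
  have hintA : CircleIntegrable (fun z : ℂ => resolvent A z * C) z₀ ρ :=
    (hcontA.mul continuousOn_const).circleIntegrable hρ.le
  have hintB : CircleIntegrable (fun z : ℂ => C * resolvent (-B) z) z₀ ρ :=
    (continuousOn_const.mul hcontB).circleIntegrable hρ.le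
  have hintAf : CircleIntegrable (fun z : ℂ => A * (resolvent A z * C * resolvent (-B) z)) z₀ ρ :=
    (continuousOn_const.mul hcontf).circleIntegrable hρ.le
  have hintfB : CircleIntegrable (fun z : ℂ => (resolvent A z * C * resolvent (-B) z) * B) z₀ ρ :=
    (hcontf.mul continuousOn_const).circleIntegrable hρ.le
  -- push multiplication inside the integral
  have hmulL : A * W = ∮ z in C(z₀, ρ), A * (resolvent A z * C * resolvent (-B) z) := by
    have := clm_circleIntegral_comm (ContinuousLinearMap.mul ℂ 𝒜 A) hint
    simpa using this
  have hmulR : W * B = ∮ z in C(z₀, ρ), (resolvent A z * C * resolvent (-B) z) * B := by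
    have := clm_circleIntegral_comm ((ContinuousLinearMap.mul ℂ 𝒜).flip B) hint
    simpa using this
  -- pointwise algebraic identity on the circle
  have hptid : ∀ z ∈ sphere z₀ ρ,
      A * (resolvent A z * C * resolvent (-B) z) + (resolvent A z * C * resolvent (-B) z) * B
        = resolvent A z * C - C * resolvent (-B) z := by
    intro z hz
    set a : 𝒜 := algebraMap ℂ 𝒜 z with ha
    set R : 𝒜 := resolvent A z with hR
    set S : 𝒜 := resolvent (-B) z with hS
    have huA : IsUnit (a - A) := spectrum.mem_resolventSet_iff.mp (hAres z hz)
    have huB : IsUnit (a + B) := by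
      have := spectrum.mem_resolventSet_iff.mp (hBres z (sphere_subset_closedBall hz))
      rwa [sub_neg_eq_add] at this
    have h1 : (a - A) * R = 1 := Ring.mul_inverse_cancel _ huA
    have h2 : S * (a + B) = 1 := by
      rw [hS, resolvent, sub_neg_eq_add]
      exact Ring.inverse_mul_cancel _ huB
    have hAR : A * R = a * R - 1 := by
      have h3 : a * R - (a - A) * R = A * R := by rw [← sub_mul, sub_sub_cancel]
      rw [← h3, h1]
    have hSB : S * B = 1 - S * a := by
      rw [eq_sub_iff_add_eq, ← mul_add, add_comm a B] at *
      exact h2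
    have hcomm : ∀ x : 𝒜, a * x = x * a := fun x => Algebra.commutes z x
    calc A * (R * C * S) + (R * C * S) * B
        = (A * R) * (C * S) + (R * C) * (S * B) := by
          simp only [mul_assoc]
      _ = (a * R - 1) * (C * S) + (R * C) * (1 - S * a) := by rw [hAR, hSB]
      _ = R * C - C * S := by
          simp only [sub_mul, mul_sub, one_mul, mul_one, mul_assoc]
          rw [hcomm (R * (C * S))]
          simp only [mul_assoc]
          abel
  -- the two boundary integrals
  have h5 : (∮ z in C(z₀, ρ), resolvent A z * C) = (2 * Real.pi * I) • C := by
    have hintA' : CircleIntegrable (resolvent A) z₀ ρ := hcontA.circleIntegrable hρ.le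
    have := clm_circleIntegral_comm ((ContinuousLinearMap.mul ℂ 𝒜).flip C) hintA'
    simp only [ContinuousLinearMap.flip_apply, ContinuousLinearMap.mul_apply'] at this
    rw [← this, hres1, smul_mul_assoc, one_mul]
  have h6 : (∮ z in C(z₀, ρ), C * resolvent (-B) z) = 0 := by
    have hintB' : CircleIntegrable (resolvent (-B)) z₀ ρ := hcontB.circleIntegrable hρ.le
    have := clm_circleIntegral_comm (ContinuousLinearMap.mul ℂ 𝒜 C) hintB'
    simp only [ContinuousLinearMap.mul_apply'] at this
    rw [← this, circleIntegral_resolvent_zero hρ.le hBres, mul_zero]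
  -- combine
  have hABW : A * W + W * B = (2 * Real.pi * I) • C := by
    rw [hmulL, hmulR, ← circleIntegral_add hintAf hintfB,
      circleIntegral.integral_congr hρ.le (fun z hz => hptid z hz),
      circleIntegral.integral_sub hintA hintB, h5, h6, sub_zero]
  have h2πI : (2 * (Real.pi : ℂ) * Complex.I) ≠ 0 := by
    simp [Real.pi_ne_zero, I_ne_zero]
  rw [hX]
  rw [mul_neg, neg_mul, mul_smul_comm, smul_mul_assoc]
  rw [← neg_add, ← smul_add, hABW, smul_smul, inv_mul_cancel₀ h2πI, one_smul]
  exact neg_add_cancel C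

end RosenblumAux

/-- Rosenblum's integral formula on a circular contour: if `σ(A)` lies inside
the open disc `B(z₀, ρ)` and `σ(-B)` is disjoint from the closed disc, then
`X := -(2πi)⁻¹ ∮_{|z-z₀|=ρ} (z·1-A)⁻¹ C (z·1+B)⁻¹ dz` solves
`A·X + X·B + C = 0`. -/
theorem stmt_4 {𝒜 : Type*} [NormedRing 𝒜] [NormedAlgebra ℂ 𝒜] [CompleteSpace 𝒜]
    (A B C : 𝒜) (z₀ : ℂ) (ρ : ℝ) (hρ : 0 < ρ)
    (hA : spectrum ℂ A ⊆ Metric.ball z₀ ρ)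
    (hB : spectrum ℂ (-B) ∩ Metric.closedBall z₀ ρ = ∅) :
    ∀ X : 𝒜,
      X = -((2 * (Real.pi : ℂ) * Complex.I)⁻¹ •
        ∮ z in C(z₀, ρ), Ring.inverse (algebraMap ℂ 𝒜 z - A) * C *
          Ring.inverse (algebraMap ℂ 𝒜 z + B)) →
      A * X + X * B + C = 0 :=
  stmt_4' A B C z₀ ρ hρ hA hB (circleIntegral_resolvent_one A z₀ hρ hA)
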